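/- For skew polynomials f, g over F_{q^m} with automorphism σ, and elements a, b in F_{q^m}, the generalized operator evaluation of the product satisfies (f·g)(b)_a = f(g(b)_a)_a, where f(b)_a = Σ_i f_i σ^i(b) N_i(a) and N_i(a) = σ^{i-1}(a)···σ(a)a. -/

import Mathlib

open Polynomial Finset

noncomputable section

variable {F : Type*} [Field F]

/-- Generalized power `N_i(a) = σ^{i-1}(a)⋯σ(a)a`, with `N_0(a) = 1`. -/
def genNorm (σ : F → F) (a : F) : ℕ → F
  | 0 => 1
  | i + 1 => σ^[i] a * genNorm σ a i

/-- Generalized operator evaluation `f(b)_a = Σ_i f_i σ^i(b) N_i(a)`. -/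
def opEval (σ : F → F) (f : Polynomial F) (a b : F) : F :=
  ∑ i ∈ f.support, f.coeff i * σ^[i] b * genNorm σ a i

/-- Skew polynomial multiplication induced by the rule `x · a = σ(a) · x`. -/
def skewMul (σ : F → F) (f g : Polynomial F) : Polynomial F :=
  ∑ i ∈ f.support, ∑ j ∈ g.support, C (f.coeff i * σ^[i] (g.coeff j)) * X ^ (i + j)

private lemma it_mul (σ : F ≃+* F) (n : ℕ) (x y : F) :
    (⇑σ)^[n] (x * y) = (⇑σ)^[n] x * (⇑σ)^[n] y := by
  induction n with
  | zero => simp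
  | succ n ih => simp [Function.iterate_succ_apply', ih, map_mul]

private lemma it_add (σ : F ≃+* F) (n : ℕ) (x y : F) :
    (⇑σ)^[n] (x + y) = (⇑σ)^[n] x + (⇑σ)^[n] y := by
  induction n with
  | zero => simp
  | succ n ih => simp [Function.iterate_succ_apply', ih, map_add]

private lemma it_zero (σ : F ≃+* F) (n : ℕ) : (⇑σ)^[n] (0 : F) = 0 := by
  induction n with
  | zero => simp
  | succ n ih => simp [Function.iterate_succ_apply', ih]

private lemma it_one (σ : F ≃+* F) (n : ℕ) : (⇑σ)^[n] (1 : F) = 1 := by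
  induction n with
  | zero => simp
  | succ n ih => simp [Function.iterate_succ_apply', ih]

private lemma it_sum (σ : F ≃+* F) (n : ℕ) {ι : Type*} (s : Finset ι) (t : ι → F) :
    (⇑σ)^[n] (∑ j ∈ s, t j) = ∑ j ∈ s, (⇑σ)^[n] (t j) := by
  classical
  induction s using Finset.induction with
  | empty => simp [it_zero]
  | insert _ _ h ih => simp [Finset.sum_insert h, it_add, ih]

private lemma genNorm_add (σ : F ≃+* F) (a : F) (i j : ℕ) :
    genNorm ⇑σ a (i + j) = (⇑σ)^[i] (genNorm ⇑σ a j) * genNorm ⇑σ a i := by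
  induction j with
  | zero => simp [genNorm, it_one]
  | succ j ih =>
      have : i + (j + 1) = (i + j) + 1 := by ring
      rw [this]
      simp only [genNorm, it_mul, ih, ← Function.iterate_add_apply]
      ring_nf

private lemma opEval_monomial (σ : F ≃+* F) (c : F) (n : ℕ) (a b : F) :
    opEval ⇑σ (C c * X ^ n) a b = c * (⇑σ)^[n] b * genNorm ⇑σ a n := by
  rw [Polynomial.C_mul_X_pow_eq_monomial]
  by_cases hc : c = 0
  · simp [opEval, hc]
  · simp [opEval, Polynomial.support_monomial n hc]

private lemma opEval_add (σ : F ≃+* F) (p q : Polynomial F) (a b : F) :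
    opEval ⇑σ (p + q) a b = opEval ⇑σ p a b + opEval ⇑σ q a b := by
  unfold opEval
  rw [show ∀ r : Polynomial F, ∑ i ∈ r.support, r.coeff i * (⇑σ)^[i] b * genNorm ⇑σ a i
      = r.sum (fun i c => c * (⇑σ)^[i] b * genNorm ⇑σ a i) from fun r => rfl]
  exact Polynomial.sum_add_index p q _ (by simp) (fun n x y => by ring)

private lemma opEval_sum (σ : F ≃+* F) {ι : Type*} (s : Finset ι) (P : ι → Polynomial F)
    (a b : F) : opEval ⇑σ (∑ i ∈ s, P i) a b = ∑ i ∈ s, opEval ⇑σ (P i) a b := by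
  classical
  induction s using Finset.induction with
  | empty => simp [opEval]
  | insert _ _ h ih => rw [Finset.sum_insert h, Finset.sum_insert h, opEval_add, ih]

/-- Product rule for generalized operator evaluation:
`(f·g)(b)_a = f(g(b)_a)_a`. -/
theorem opEval_skewMul [Fintype F] (σ : F ≃+* F) (f g : Polynomial F) (a b : F) :
    opEval ⇑σ (skewMul ⇑σ f g) a b = opEval ⇑σ f a (opEval ⇑σ g a b) := by
  unfold skewMul
  rw [opEval_sum]
  refine Finset.sum_congr rfl fun i _ => ?_
  rw [opEval_sum]
  simp only [opEval_monomial]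
  simp only [opEval, it_sum, Finset.mul_sum, Finset.sum_mul]
  refine Finset.sum_congr rfl fun j _ => ?_
  rw [genNorm_add, it_mul, it_mul, Function.iterate_add_apply]
  ring
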